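/- Let ψ be a normalized vector with decomposition ψ = Σ_j c_j φ_j into unit vectors, and let Ω be the random sparsified vector as in the Sparsification Lemma with k terms. If k ≥ ‖c‖₁²/δ², then E[⟨Ω,Ω⟩ − 1] ≤ δ². -/

import Mathlib

open scoped BigOperators
open Finset

local notation "⟪" x ", " y "⟫" => @inner ℂ _ _ x y

section aux
variable {V : Type*} [NormedAddCommGroup V] [InnerProductSpace ℂ V]
variable {N : ℕ} (p : Fin N → ℝ) (w : Fin N → V)

lemma auxP (hp : ∑ j, p j = 1) (k : ℕ) :
    ∑ f : Fin k → Fin N, ∏ α, p (f α) = 1 := by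
  rw [← Fintype.sum_pow, hp, one_pow]

lemma auxT (hp : ∑ j, p j = 1) (k : ℕ) :
    ∑ f : Fin k → Fin N, (∏ α, p (f α)) • (∑ α, w (f α))
      = (k : ℝ) • (∑ j, p j • w j) := by
  induction k with
  | zero => simp
  | succ k ih =>
      rw [← Equiv.sum_comp (Fin.consEquiv fun _ => Fin N)]
      rw [Fintype.sum_prod_type]
      simp only [Fin.consEquiv_apply, Fin.prod_univ_succ, Fin.sum_univ_succ,
        Fin.cons_zero, Fin.cons_succ, smul_add, mul_smul]
      simp only [Finset.sum_add_distrib]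
      have h1 : (∑ x : Fin N, ∑ g : Fin k → Fin N, p x • (∏ α, p (g α)) • w x)
          = ∑ j, p j • w j := by
        refine Finset.sum_congr rfl fun x _ => ?_
        simp only [smul_smul]
        rw [← Finset.sum_smul, ← Finset.mul_sum, auxP p hp k, mul_one]
      have h2 : (∑ x : Fin N, ∑ g : Fin k → Fin N, p x • ((∏ α, p (g α)) • ∑ α, w (g α)))
          = (k : ℝ) • ∑ j, p j • w j := by
        calc (∑ x : Fin N, ∑ g : Fin k → Fin N, p x • ((∏ α, p (g α)) • ∑ α, w (g α)))
            = ∑ x : Fin N, p x • ((k : ℝ) • ∑ j, p j • w j) := by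
              refine Finset.sum_congr rfl fun x _ => ?_
              rw [← Finset.smul_sum, ih]
          _ = (k : ℝ) • ∑ j, p j • w j := by rw [← Finset.sum_smul, hp, one_smul]
      rw [h1, h2]
      push_cast
      module
end aux

section aux2
variable {V : Type*} [NormedAddCommGroup V] [InnerProductSpace ℂ V]

lemma sir (r : ℝ) (x y : V) : ⟪ x, r • y ⟫ = r • ⟪ x, y ⟫ := by
  rw [RCLike.real_smul_eq_coe_smul (K := ℂ) r y]
  exact inner_smul_real_right x y r

lemma sil (r : ℝ) (x y : V) : ⟪ r • x, y ⟫ = r • ⟪ x, y ⟫ := by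
  rw [RCLike.real_smul_eq_coe_smul (K := ℂ) r x]
  exact inner_smul_real_left x y r

variable {N : ℕ} (p : Fin N → ℝ) (w : Fin N → V)

lemma auxS (hp : ∑ j, p j = 1) (k : ℕ) :
    ∑ f : Fin k → Fin N, (∏ α, p (f α)) • ⟪ ∑ α, w (f α), ∑ α, w (f α) ⟫
      = (k : ℝ) • (∑ j, p j • ⟪ w j, w j ⟫)
        + ((k : ℝ) * ((k : ℝ) - 1)) • ⟪ ∑ j, p j • w j, ∑ j, p j • w j ⟫ := by
  induction k with
  | zero => simp
  | succ k ih =>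
      rw [← Equiv.sum_comp (Fin.consEquiv fun _ => Fin N)]
      rw [Fintype.sum_prod_type]
      simp only [Fin.consEquiv_apply, Fin.prod_univ_succ, Fin.sum_univ_succ,
        Fin.cons_zero, Fin.cons_succ, inner_add_add_self, smul_add, mul_smul]
      simp only [Finset.sum_add_distrib]
      have hT : (∑ g : Fin k → Fin N, (∏ α, p (g α)) • ∑ α, w (g α))
            = (k : ℝ) • ∑ j, p j • w j := auxT p w hp k
      have h1 : (∑ x : Fin N, ∑ g : Fin k → Fin N,
            p x • (∏ α, p (g α)) • ⟪ w x, w x ⟫) = ∑ j, p j • ⟪ w j, w j ⟫ := by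
        refine Finset.sum_congr rfl fun x _ => ?_
        simp only [smul_smul]
        rw [← Finset.sum_smul, ← Finset.mul_sum, auxP p hp k, mul_one]
      have h2 : (∑ x : Fin N, ∑ g : Fin k → Fin N,
            p x • (∏ α, p (g α)) • ⟪ w x, ∑ α, w (g α) ⟫)
          = (k : ℝ) • ⟪ ∑ j, p j • w j, ∑ j, p j • w j ⟫ := by
        have e1 : ∀ x : Fin N, (∑ g : Fin k → Fin N,
            (∏ α, p (g α)) • ⟪ w x, ∑ α, w (g α) ⟫)
            = (k : ℝ) • ⟪ w x, ∑ j, p j • w j ⟫ := by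
          intro x
          simp only [← sir, ← inner_sum, hT]
        simp only [← Finset.smul_sum, e1]
        simp only [smul_comm _ ((k : ℝ)), ← Finset.smul_sum, ← sil, ← sum_inner]
      have h3 : (∑ x : Fin N, ∑ g : Fin k → Fin N,
            p x • (∏ α, p (g α)) • ⟪ ∑ α, w (g α), w x ⟫)
          = (k : ℝ) • ⟪ ∑ j, p j • w j, ∑ j, p j • w j ⟫ := by
        have e1 : ∀ x : Fin N, (∑ g : Fin k → Fin N,
            (∏ α, p (g α)) • ⟪ ∑ α, w (g α), w x ⟫)
            = (k : ℝ) • ⟪ ∑ j, p j • w j, w x ⟫ := by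
          intro x
          simp only [← sil, ← sum_inner, hT]
        simp only [← Finset.smul_sum, e1]
        simp only [smul_comm _ ((k : ℝ)), ← Finset.smul_sum, ← sir, ← inner_sum]
      have h4 : (∑ x : Fin N, ∑ g : Fin k → Fin N,
            p x • (∏ α, p (g α)) • ⟪ ∑ α, w (g α), ∑ α, w (g α) ⟫)
          = (k : ℝ) • (∑ j, p j • ⟪ w j, w j ⟫)
            + ((k : ℝ) * ((k : ℝ) - 1)) • ⟪ ∑ j, p j • w j, ∑ j, p j • w j ⟫ := by
        simp only [← Finset.smul_sum, ih, ← Finset.sum_smul, hp, one_smul]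
      rw [h1, h2, h3, h4]
      simp only [Complex.real_smul]
      push_cast
      ring
end aux2

/-- Sparsification tail bound, first part: `E[⟨Ω,Ω⟩ − 1] ≤ δ²` when `k ≥ ‖c‖₁²/δ²`. -/
theorem sparsification_norm_expectation
    {V : Type*} [NormedAddCommGroup V] [InnerProductSpace ℂ V]
    (N k : ℕ) (hk : 0 < k) (δ : ℝ) (hδ : 0 < δ)
    (ψ : V) (hψ : ‖ψ‖ = 1)
    (c : Fin N → ℂ) (φ : Fin N → V) (hφ : ∀ j, ‖φ j‖ = 1)
    (hdec : ψ = ∑ j, c j • φ j)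
    (hkb : (∑ j, ‖c j‖) ^ 2 / δ ^ 2 ≤ (k : ℝ)) :
    ∑ f : Fin k → Fin N,
      (∏ α, ‖c (f α)‖ / (∑ j, ‖c j‖)) *
        (‖((∑ j, ‖c j‖) / (k : ℝ)) •
            ∑ α, ((c (f α) / (‖c (f α)‖ : ℂ)) • φ (f α))‖ ^ 2 - 1)
      ≤ δ ^ 2 := by
  set L : ℝ := ∑ j, ‖c j‖ with hLdef
  set p : Fin N → ℝ := fun j => ‖c j‖ / L with hpdef
  set w : Fin N → V := fun j => (c j / (‖c j‖ : ℂ)) • φ j with hwdef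
  -- L ≥ 1
  have hL1 : 1 ≤ L := by
    rw [← hψ, hdec]
    refine (norm_sum_le _ _).trans_eq ?_
    refine Finset.sum_congr rfl fun j _ => ?_
    rw [norm_smul, hφ j, mul_one]
  have hL0 : (0:ℝ) < L := lt_of_lt_of_le one_pos hL1
  have hk0 : (0:ℝ) < (k:ℝ) := by exact_mod_cast hk
  have hp : ∑ j, p j = 1 := by
    rw [hpdef, ← Finset.sum_div, div_self hL0.ne']
  -- the mean vector
  have hm : (∑ j, p j • w j) = (1 / L) • ψ := by
    rw [hdec, Finset.smul_sum]
    refine Finset.sum_congr rfl fun j _ => ?_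
    by_cases h : c j = 0
    · simp [hpdef, hwdef, h]
    · have hnc : (‖c j‖ : ℂ) ≠ 0 := by
        simpa using norm_ne_zero_iff.mpr h
      rw [hpdef, hwdef]
      simp only []
      rw [RCLike.real_smul_eq_coe_smul (K := ℂ), RCLike.real_smul_eq_coe_smul (K := ℂ),
        smul_smul, smul_smul]
      congr 1
      push_cast
      field_simp
      rfl
  have hA : (∑ j, p j • ⟪w j, w j⟫) = 1 := by
    have : ∀ j, p j • ⟪w j, w j⟫ = ((p j : ℝ) : ℂ) := by
      intro j
      by_cases h : c j = 0
      · simp [hpdef, hwdef, h]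
      · have h1 : ‖w j‖ = 1 := by
          rw [hwdef]
          simp only []
          rw [norm_smul, hφ j, mul_one, norm_div, Complex.norm_real, norm_norm]
          exact div_self (norm_ne_zero_iff.mpr h)
        rw [inner_self_eq_norm_sq_to_K (𝕜 := ℂ), h1, Complex.real_smul]
        push_cast
        ring
    rw [Finset.sum_congr rfl fun j _ => this j]
    rw [← Complex.ofReal_sum, hp, Complex.ofReal_one]
  have hM : ⟪∑ j, p j • w j, ∑ j, p j • w j⟫ = ((1 / L ^ 2 : ℝ) : ℂ) := by
    rw [hm, sil, sir, inner_self_eq_norm_sq_to_K (𝕜 := ℂ), hψ]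
    simp only [Complex.real_smul, Complex.ofReal_one, one_pow, mul_one]
    push_cast
    ring
  -- rewrite the sum
  have key : ∑ f : Fin k → Fin N,
      (∏ α, p (f α)) * (‖((L / (k : ℝ))) • ∑ α, w (f α)‖ ^ 2 - 1)
      = (L / k) ^ 2 * ((k : ℝ) + (k : ℝ) * ((k : ℝ) - 1) * (1 / L ^ 2)) - 1 := by
    have hnn : (0:ℝ) ≤ L / k := le_of_lt (div_pos hL0 hk0)
    have e1 : ∀ f : Fin k → Fin N,
        (∏ α, p (f α)) * (‖((L / (k : ℝ))) • ∑ α, w (f α)‖ ^ 2 - 1)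
        = (L / k) ^ 2 * ((∏ α, p (f α)) • ⟪∑ α, w (f α), ∑ α, w (f α)⟫).re
          - (∏ α, p (f α)) := by
      intro f
      have hre : (⟪∑ α, w (f α), ∑ α, w (f α)⟫ : ℂ).re = ‖∑ α, w (f α)‖ ^ 2 := by
        rw [← RCLike.re_to_complex]
        exact inner_self_eq_norm_sq _
      rw [norm_smul, Real.norm_eq_abs, abs_of_nonneg hnn, mul_pow,
        ← RCLike.re_to_complex, RCLike.smul_re, RCLike.re_to_complex, hre]
      ring
    rw [Finset.sum_congr rfl fun f _ => e1 f, Finset.sum_sub_distrib, auxP p hp k]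
    rw [← Finset.mul_sum, ← Complex.re_sum, auxS p w hp k]
    rw [hA, hM]
    simp only [Complex.add_re, Complex.smul_re, Complex.ofReal_re, Complex.one_re,
      smul_eq_mul]
    ring
  rw [key]
  have hval : (L / k) ^ 2 * ((k : ℝ) + (k : ℝ) * ((k : ℝ) - 1) * (1 / L ^ 2)) - 1
      = (L ^ 2 - 1) / k := by
    field_simp
    ring
  rw [hval]
  have hL2 : L ^ 2 ≤ (k : ℝ) * δ ^ 2 := by
    rw [div_le_iff₀ (by positivity)] at hkb
    linarith
  rw [div_le_iff₀ hk0]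
  nlinarith
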